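/- Fix K ≥ 2 arms with mean rewards μ : {1,…,K} → ℝ and let Δ_k = |max_{i≠k} μ_i − μ_k|. Let U, L : {1,…,K} → ℝ satisfy L_i ≤ μ_i ≤ U_i for all arms i; set s_k = U_k − L_k and B_k = max_{i≠k} U_i − L_k. Let J be an arm with B_J ≤ B_k for all k, let j ≠ J be an arm with U_j ≥ U_i for all i ≠ J, and let a ∈ {j, J} be an arm with s_a = max(s_j, s_J). Then B_J ≤ min(0, s_a − Δ_a) + s_a. -/
import Mathlib


open Finset

/-- With at least two arms, the set of arms other than `k` is nonempty. -/
lemma eraseNe {K : ℕ} (hK : 2 ≤ K) (k : Fin K) :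
    ((univ : Finset (Fin K)).erase k).Nonempty := by
  apply card_pos.mp
  rw [card_erase_of_mem (mem_univ k), card_univ, Fintype.card_fin]
  omega

/-- The maximum of `f` over all arms other than `k`. -/
noncomputable def maxOther {K : ℕ} (hK : 2 ≤ K) (f : Fin K → ℝ) (k : Fin K) : ℝ :=
  ((univ : Finset (Fin K)).erase k).sup' (eraseNe hK k) f

/-- The gap index `B_k = max_{i ≠ k} U_i − L_k`. -/
noncomputable def gapB {K : ℕ} (hK : 2 ≤ K) (U L : Fin K → ℝ) (k : Fin K) : ℝ :=
  maxOther hK U k - L k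

lemma le_maxOther {K : ℕ} (hK : 2 ≤ K) (f : Fin K → ℝ) {i k : Fin K} (h : i ≠ k) :
    f i ≤ maxOther hK f k :=
  Finset.le_sup' f (by simp [h])

lemma maxOther_le {K : ℕ} (hK : 2 ≤ K) (f : Fin K → ℝ) {k : Fin K} {c : ℝ}
    (h : ∀ i, i ≠ k → f i ≤ c) : maxOther hK f k ≤ c := by
  apply Finset.sup'_le
  intro i hi
  exact h i (Finset.mem_erase.mp hi).1

lemma maxOther_mono {K : ℕ} (hK : 2 ≤ K) {f g : Fin K → ℝ} (h : ∀ i, f i ≤ g i)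
    (k : Fin K) : maxOther hK f k ≤ maxOther hK g k := by
  apply maxOther_le
  intro i hi
  exact le_trans (h i) (le_maxOther hK g hi)

/-- Lemma A4: on the event that all bounds hold, if `J` minimizes the gap index,
`j ≠ J` is the best runner-up, and the pulled arm `a ∈ {j, J}` has the larger
confidence diameter `s_a = max(s_j, s_J)` (with `s_k = U_k − L_k`), then
`B_J ≤ min(0, s_a − Δ_a) + s_a`, where `Δ_k = |max_{i ≠ k} μ_i − μ_k|`. -/
theorem min_gap_le_min_zero_add_uncertainty {K : ℕ} (hK : 2 ≤ K)
    (μ U L : Fin K → ℝ)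
    (hE : ∀ i, L i ≤ μ i ∧ μ i ≤ U i)
    (J j a : Fin K)
    (hJ : ∀ k, gapB hK U L J ≤ gapB hK U L k)
    (hjJ : j ≠ J) (hj : ∀ i, i ≠ J → U i ≤ U j)
    (haMem : a = j ∨ a = J)
    (haMax : U a - L a = max (U j - L j) (U J - L J)) :
    gapB hK U L J ≤
      min 0 ((U a - L a) - |maxOther hK μ a - μ a|) + (U a - L a) := by
  -- maxOther U J = U j
  have hBJ : maxOther hK U J = U j :=
    le_antisymm (maxOther_le hK U hj) (le_maxOther hK U hjJ)
  have hBJ' : gapB hK U L J = U j - L J := by rw [gapB, hBJ]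
  have hsj : U j - L j ≤ U a - L a := haMax ▸ le_max_left _ _
  have hsJ : U J - L J ≤ U a - L a := haMax ▸ le_max_right _ _
  -- Claim 1 : B_J ≤ s_a
  have claim1 : U j - L J ≤ U a - L a := by
    rcases le_total (U j) (U J) with h | h
    · linarith
    · have h1 := hJ j
      rw [hBJ'] at h1
      have h2 : maxOther hK U j ≤ U j := by
        apply maxOther_le
        intro i hi
        by_cases hiJ : i = J
        · rw [hiJ]; exact h
        · exact hj i hiJ
      rw [gapB] at h1
      linarith
  -- Claim 2 : B_J + Δ_a ≤ 2 s_a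
  have claim2 : U j - L J + |maxOther hK μ a - μ a| ≤ 2 * (U a - L a) := by
    rcases haMem with h | h <;> rw [h] at hsj hsJ claim1 ⊢
    · -- a = j
      have hmU : maxOther hK μ j ≤ maxOther hK U j :=
        maxOther_mono hK (fun i => (hE i).2) j
      rcases abs_cases (maxOther hK μ j - μ j) with ⟨habs, _⟩ | ⟨habs, _⟩ <;> rw [habs]
      · have hUj : maxOther hK U j ≤ max (U J) (U j) := by
          apply maxOther_le
          intro i hi
          by_cases hiJ : i = J
          · rw [hiJ]; exact le_max_left _ _
          · exact le_trans (hj i hiJ) (le_max_right _ _)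
        have hLj : L j ≤ μ j := (hE j).1
        rcases le_total (U J) (U j) with h | h
        · rw [max_eq_right h] at hUj; linarith
        · rw [max_eq_left h] at hUj; linarith
      · have h1 : μ J ≤ maxOther hK μ j := le_maxOther hK μ (Ne.symm hjJ)
        have h2 : μ j ≤ U j := (hE j).2
        have h3 : L J ≤ μ J := (hE J).1
        linarith
    · -- a = J
      have hmU : maxOther hK μ J ≤ maxOther hK U J :=
        maxOther_mono hK (fun i => (hE i).2) J
      rcases abs_cases (maxOther hK μ J - μ J) with ⟨habs, _⟩ | ⟨habs, _⟩ <;> rw [habs]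
      · have h3 : L J ≤ μ J := (hE J).1
        rw [hBJ] at hmU
        linarith
      · have h1 : μ j ≤ maxOther hK μ J := le_maxOther hK μ hjJ
        have h2 : μ J ≤ U J := (hE J).2
        have h3 : L j ≤ μ j := (hE j).1
        linarith
  rw [hBJ']
  rcases le_total 0 ((U a - L a) - |maxOther hK μ a - μ a|) with h | h
  · rw [min_eq_left h]; linarith
  · rw [min_eq_right h]; linarith
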